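/- Adjusting the marginal of a Gaussian vector: Let (X_A, X_B) be jointly centered Gaussian with positive definite covariance Σ (block structure Σ_AA, Σ_AB, Σ_BA, Σ_BB) and precision Q = Σ^{-1}. Let H be a symmetric positive definite matrix, X_B* ~ N(0, H) independent of X_{A|B} ~ N(0, Σ_AA − Σ_AB Σ_BB^{-1} Σ_BA), and set X_A* = X_{A|B} + Σ_AB Σ_BB^{-1} X_B*. Then (X_A*, X_B*) is centered Gaussian with precision matrix Q* whose blocks are Q*_{AA} = Q_{AA}, Q*_{AB} = Q_{AB}, Q*_{BA} = Q_{BA}, and Q*_{BB} = Q_{BB} + H^{-1} − Σ_BB^{-1}. -/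

import Mathlib

open Matrix

/-- Adjusting the marginal of a Gaussian vector (matrix form): if `Σ` is a symmetric
positive definite block matrix with inverse `Q` (in blocks), and `H` is symmetric
positive definite, then the covariance matrix `Σ*` of the adjusted vector
`(X_A*, X_B*)`, with `X_B* ~ N(0, H)` and `X_A* = X_{A|B} + Σ_AB Σ_BB⁻¹ X_B*`, has
inverse (precision matrix) with blocks `Q_AA, Q_AB, Q_BA, Q_BB + H⁻¹ − Σ_BB⁻¹`. -/
theorem gaussian_adjust_marginal_precision
    {A B : Type*} [Fintype A] [Fintype B] [DecidableEq A] [DecidableEq B]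
    (SAA : Matrix A A ℝ) (SAB : Matrix A B ℝ) (SBA : Matrix B A ℝ) (SBB : Matrix B B ℝ)
    (QAA : Matrix A A ℝ) (QAB : Matrix A B ℝ) (QBA : Matrix B A ℝ) (QBB : Matrix B B ℝ)
    (hSsym : (Matrix.fromBlocks SAA SAB SBA SBB).IsSymm)
    (hSpd : (Matrix.fromBlocks SAA SAB SBA SBB).PosDef)
    (hQ : (Matrix.fromBlocks SAA SAB SBA SBB)⁻¹ = Matrix.fromBlocks QAA QAB QBA QBB)
    (H : Matrix B B ℝ) (hHsym : H.IsSymm) (hHpd : H.PosDef) :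
    (Matrix.fromBlocks
      (SAA - SAB * SBB⁻¹ * SBA + SAB * SBB⁻¹ * H * SBB⁻¹ * SBA)
      (SAB * SBB⁻¹ * H)
      (H * SBB⁻¹ * SBA)
      H)⁻¹ =
      Matrix.fromBlocks QAA QAB QBA (QBB + H⁻¹ - SBB⁻¹) := by
  -- SBB is positive definite
  have hSBBpd : SBB.PosDef := by
    refine Matrix.posDef_iff_dotProduct_mulVec.mpr ⟨?_, ?_⟩
    · have h1 := hSpd.isHermitian
      rw [Matrix.IsHermitian, Matrix.fromBlocks_conjTranspose] at h1
      exact (Matrix.fromBlocks_inj.mp h1).2.2.2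
    · intro x hx
      have hx' : (Sum.elim 0 x : A ⊕ B → ℝ) ≠ 0 := by
        intro h
        apply hx
        funext b
        have := congrFun h (Sum.inr b)
        simpa using this
      have := hSpd.dotProduct_mulVec_pos hx'
      simpa [Matrix.fromBlocks_mulVec, Function.star_sumElim, sumElim_dotProduct_sumElim] using this
  have hSBB : SBB * SBB⁻¹ = 1 := Matrix.mul_nonsing_inv _ (isUnit_iff_isUnit_det _ |>.mp hSBBpd.isUnit)
  have hSBB' : SBB⁻¹ * SBB = 1 := Matrix.nonsing_inv_mul _ (isUnit_iff_isUnit_det _ |>.mp hSBBpd.isUnit)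
  have hH : H * H⁻¹ = 1 := Matrix.mul_nonsing_inv _ (isUnit_iff_isUnit_det _ |>.mp hHpd.isUnit)
  -- the block equations from S * Q = 1
  have hSQ : Matrix.fromBlocks SAA SAB SBA SBB * Matrix.fromBlocks QAA QAB QBA QBB = 1 := by
    rw [← hQ]
    exact Matrix.mul_nonsing_inv _ (isUnit_iff_isUnit_det _ |>.mp hSpd.isUnit)
  rw [Matrix.fromBlocks_multiply, ← Matrix.fromBlocks_one] at hSQ
  obtain ⟨e1, e2, e3, e4⟩ := Matrix.fromBlocks_inj.mp hSQ
  -- derive quotient forms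
  have f3 : SBB⁻¹ * SBA * QAA + QBA = 0 := by
    have := congrArg (fun M => SBB⁻¹ * M) e3
    simpa [Matrix.mul_add, ← Matrix.mul_assoc, hSBB'] using this
  have f4 : SBB⁻¹ * SBA * QAB + QBB = SBB⁻¹ := by
    have := congrArg (fun M => SBB⁻¹ * M) e4
    simpa [Matrix.mul_add, ← Matrix.mul_assoc, hSBB'] using this
  have hcanA : ∀ (X : Matrix B A ℝ), SBB⁻¹ * (SBB * X) = X := fun X => by
    rw [← Matrix.mul_assoc, hSBB', Matrix.one_mul]
  have hcanB : ∀ (X : Matrix B B ℝ), SBB⁻¹ * (SBB * X) = X := fun X => by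
    rw [← Matrix.mul_assoc, hSBB', Matrix.one_mul]
  -- show the product is one
  apply Matrix.inv_eq_right_inv
  rw [Matrix.fromBlocks_multiply, ← Matrix.fromBlocks_one]
  refine Matrix.fromBlocks_inj.mpr ⟨?_, ?_, ?_, ?_⟩
  · -- top-left
    have h3 : SAB * SBB⁻¹ * H * (SBB⁻¹ * SBA * QAA + QBA) = 0 := by rw [f3, Matrix.mul_zero]
    calc (SAA - SAB * SBB⁻¹ * SBA + SAB * SBB⁻¹ * H * SBB⁻¹ * SBA) * QAA + SAB * SBB⁻¹ * H * QBA
        = (SAA * QAA + SAB * QBA) - SAB * SBB⁻¹ * (SBA * QAA + SBB * QBA)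
            + SAB * SBB⁻¹ * H * (SBB⁻¹ * SBA * QAA + QBA) := by
          simp only [Matrix.mul_add, Matrix.mul_sub, Matrix.sub_mul, Matrix.add_mul,
            Matrix.mul_assoc, Matrix.mul_one, Matrix.one_mul, sub_eq_add_neg, neg_add,
            Matrix.mul_neg, Matrix.neg_mul, hcanA, hcanB]
          abel
      _ = 1 := by rw [e1, e3, h3]; simp
  · -- top-right
    have h4 : SAB * SBB⁻¹ * H * (SBB⁻¹ * SBA * QAB + QBB - SBB⁻¹) = 0 := by
      rw [sub_eq_zero_of_eq f4, Matrix.mul_zero]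
    calc (SAA - SAB * SBB⁻¹ * SBA + SAB * SBB⁻¹ * H * SBB⁻¹ * SBA) * QAB
          + SAB * SBB⁻¹ * H * (QBB + H⁻¹ - SBB⁻¹)
        = (SAA * QAB + SAB * QBB) - SAB * SBB⁻¹ * (SBA * QAB + SBB * QBB - 1)
            + SAB * SBB⁻¹ * (H * H⁻¹ - 1)
            + SAB * SBB⁻¹ * H * (SBB⁻¹ * SBA * QAB + QBB - SBB⁻¹) := by
          simp only [Matrix.mul_add, Matrix.mul_sub, Matrix.sub_mul, Matrix.add_mul,
            Matrix.mul_assoc, Matrix.mul_one, Matrix.one_mul, sub_eq_add_neg, neg_add,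
            Matrix.mul_neg, Matrix.neg_mul, hcanA, hcanB]
          abel
      _ = 0 := by rw [e2, e4, hH, h4]; simp
  · -- bottom-left
    calc H * SBB⁻¹ * SBA * QAA + H * QBA
        = H * SBB⁻¹ * (SBA * QAA + SBB * QBA) + H * (1 - SBB⁻¹ * SBB) * QBA := by
          simp only [Matrix.mul_add, Matrix.mul_sub, Matrix.sub_mul, Matrix.add_mul,
            Matrix.mul_assoc, Matrix.mul_one, Matrix.one_mul, sub_eq_add_neg, neg_add,
            Matrix.mul_neg, Matrix.neg_mul, hcanA, hcanB]
          abel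
      _ = 0 := by rw [e3, hSBB']; simp
  · -- bottom-right
    calc H * SBB⁻¹ * SBA * QAB + H * (QBB + H⁻¹ - SBB⁻¹)
        = H * SBB⁻¹ * (SBA * QAB + SBB * QBB - 1) + H * (1 - SBB⁻¹ * SBB) * QBB + H * H⁻¹ := by
          simp only [Matrix.mul_add, Matrix.mul_sub, Matrix.sub_mul, Matrix.add_mul,
            Matrix.mul_assoc, Matrix.mul_one, Matrix.one_mul, sub_eq_add_neg, neg_add,
            Matrix.mul_neg, Matrix.neg_mul, hcanA, hcanB]
          abel
      _ = 1 := by rw [e4, hSBB', hH]; simp
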